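/- arXiv:1501.02168 — 4 statements merged into one kernel-verified Lean document; each statement's English description precedes it below -/
import Mathlib

section
/- For a polynomial p of degree n with all roots real, and any real z that is not a root, the quantity (n−1)²p'(z)² − n(n−1)p(z)p''(z) is nonnegative; hence the square root in Laguerre's formula is real. -/
open Finset

/-- For a real polynomial with all roots real and a non-root real point, the Laguerre
radicand `(n-1)²p'² - n(n-1)p p''` is nonnegative. -/
theorem laguerre_radicand_nonneg_real_roots (n : ℕ) (hn : 1 ≤ n)
    (c : ℝ) (hc : c ≠ 0) (ρ : Fin n → ℝ)
    (p : ℝ → ℝ) (hp : ∀ z, p z = c * ∏ j, (z - ρ j))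
    (z : ℝ) (hz : p z ≠ 0) :
    0 ≤ ((n : ℝ) - 1) ^ 2 * (deriv p z) ^ 2
        - (n : ℝ) * ((n : ℝ) - 1) * p z * deriv (deriv p) z := by
  classical
  -- first derivative as a function
  set g : ℝ → ℝ := fun x => c * ∑ j, ∏ i ∈ Finset.univ.erase j, (x - ρ i) with hg
  have hder1 : ∀ x : ℝ, HasDerivAt p (g x) x := by
    intro x
    have hprod : HasDerivAt (fun y => ∏ j, (y - ρ j))
        (∑ j, (∏ i ∈ Finset.univ.erase j, (x - ρ i)) • (1 : ℝ)) x := by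
      exact HasDerivAt.fun_finsetProd (fun i _ => (hasDerivAt_id x).sub_const (ρ i))
    have := hprod.const_mul c
    simp only [smul_eq_mul, mul_one] at this ⊢
    have hpe : p = fun y => c * ∏ j, (y - ρ j) := funext hp
    rw [hpe, hg]
    exact this
  have hderiv1 : deriv p = g := funext fun x => (hder1 x).deriv
  -- second derivative value at z
  have hder2 : HasDerivAt g
      (c * ∑ j, ∑ i ∈ Finset.univ.erase j,
        ∏ k ∈ (Finset.univ.erase j).erase i, (z - ρ k)) z := by
    have hsum : HasDerivAt (fun x => ∑ j, ∏ i ∈ Finset.univ.erase j, (x - ρ i))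
        (∑ j, ∑ i ∈ Finset.univ.erase j,
          ∏ k ∈ (Finset.univ.erase j).erase i, (z - ρ k)) z := by
      apply HasDerivAt.fun_sum
      intro j _
      have := HasDerivAt.fun_finsetProd
        (u := Finset.univ.erase j) (f := fun i y => y - ρ i)
        (f' := fun _ => (1 : ℝ)) (x := z)
        (fun i _ => (hasDerivAt_id z).sub_const (ρ i))
      simpa only [smul_eq_mul, mul_one] using this
    exact hsum.const_mul c
  have hderiv2 : deriv (deriv p) z
      = c * ∑ j, ∑ i ∈ Finset.univ.erase j,
          ∏ k ∈ (Finset.univ.erase j).erase i, (z - ρ k) := by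
    rw [hderiv1]; exact hder2.deriv
  -- algebraic setup
  set w : Fin n → ℝ := fun j => (z - ρ j)⁻¹ with hw
  set Q : ℝ := ∏ j, (z - ρ j) with hQ
  have hfac : ∀ j, z - ρ j ≠ 0 := by
    intro j
    have hQ0 : Q ≠ 0 := by
      intro h; apply hz; rw [hp z, ← hQ, h, mul_zero]
    intro h
    exact hQ0 (Finset.prod_eq_zero (Finset.mem_univ j) h)
  have hQ0 : Q ≠ 0 := fun h => hz (by rw [hp z, ← hQ, h, mul_zero])
  set S : ℝ := ∑ j, w j with hS
  set T : ℝ := ∑ j, (w j) ^ 2 with hT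
  -- erased products
  have herase : ∀ j, ∏ i ∈ Finset.univ.erase j, (z - ρ i) = Q * w j := by
    intro j
    have h1 : (z - ρ j) * ∏ i ∈ Finset.univ.erase j, (z - ρ i) = Q :=
      Finset.mul_prod_erase Finset.univ (fun i => z - ρ i) (Finset.mem_univ j)
    have h2 : ∏ i ∈ Finset.univ.erase j, (z - ρ i)
        = (z - ρ j)⁻¹ * ((z - ρ j) * ∏ i ∈ Finset.univ.erase j, (z - ρ i)) := by
      rw [← mul_assoc, inv_mul_cancel₀ (hfac j), one_mul]
    rw [h2, h1, hw]; ring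
  have herase2 : ∀ j, ∀ i ∈ Finset.univ.erase j,
      ∏ k ∈ (Finset.univ.erase j).erase i, (z - ρ k) = Q * w j * w i := by
    intro j i hi
    have h1 : (z - ρ i) * ∏ k ∈ (Finset.univ.erase j).erase i, (z - ρ k)
        = ∏ i ∈ Finset.univ.erase j, (z - ρ i) :=
      Finset.mul_prod_erase _ (fun i => z - ρ i) hi
    rw [herase j] at h1
    have h2 : ∏ k ∈ (Finset.univ.erase j).erase i, (z - ρ k)
        = (z - ρ i)⁻¹ * ((z - ρ i) * ∏ k ∈ (Finset.univ.erase j).erase i, (z - ρ k)) := by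
      rw [← mul_assoc, inv_mul_cancel₀ (hfac i), one_mul]
    rw [h2, h1, hw]; ring
  -- first derivative value
  have hd1 : deriv p z = p z * S := by
    rw [hderiv1, hg]
    simp only [herase]
    rw [← Finset.mul_sum, hp z, ← hQ, hS]
    ring
  -- second derivative value
  have hd2 : deriv (deriv p) z = p z * (S * S - T) := by
    rw [hderiv2]
    have : ∀ j : Fin n, ∑ i ∈ Finset.univ.erase j,
        ∏ k ∈ (Finset.univ.erase j).erase i, (z - ρ k) = Q * w j * (S - w j) := by
      intro j
      rw [Finset.sum_congr rfl (herase2 j)]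
      rw [← Finset.mul_sum, Finset.sum_erase_eq_sub (Finset.mem_univ j), ← hS]
    rw [Finset.sum_congr rfl (fun j _ => this j)]
    have hsum : ∑ j, Q * w j * (S - w j) = Q * (S * S - T) := by
      have e1 : ∑ j, Q * w j * (S - w j) = Q * ∑ j, (w j * S - w j ^ 2) := by
        rw [Finset.mul_sum]; exact Finset.sum_congr rfl fun j _ => by ring
      rw [e1, Finset.sum_sub_distrib, ← Finset.sum_mul, ← hS, ← hT]
    rw [hsum, hp z, ← hQ]
    ring
  -- Cauchy-Schwarz
  have hCS : S ^ 2 ≤ (n : ℝ) * T := by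
    have := Finset.sum_mul_sq_le_sq_mul_sq Finset.univ (fun _ : Fin n => (1 : ℝ)) w
    simpa [hS, hT, Finset.card_univ] using this
  have hn1 : (0 : ℝ) ≤ (n : ℝ) - 1 := by
    have : (1 : ℝ) ≤ (n : ℝ) := by exact_mod_cast hn
    linarith
  rw [hd1, hd2]
  have key : ((n : ℝ) - 1) ^ 2 * (p z * S) ^ 2
      - (n : ℝ) * ((n : ℝ) - 1) * p z * (p z * (S * S - T))
      = (p z) ^ 2 * (((n : ℝ) - 1) * ((n : ℝ) * T - S ^ 2)) := by ring
  rw [key]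
  apply mul_nonneg (sq_nonneg _)
  exact mul_nonneg hn1 (by linarith)
end

section
/- Local cubic convergence bound for Newton-type analysis: if ρ is a simple root of p and L is Laguerre's iteration function with the appropriate branch of the square root, then L is analytic in a neighborhood of ρ and L(z) − ρ = O(|z − ρ|³) as z → ρ, provided n ≥ 2. -/
open Polynomial Metric

private lemma laguerre_key (nc u Q Q' Q'' s : ℂ)
    (hs2 : s ^ 2 = (nc-1)^2 * (Q + u*Q')^2 - nc*(nc-1)*(u*Q)*(2*Q'+u*Q''))
    (hD : s + ((nc-1)*Q - u*Q') ≠ 0) (hden : (Q + u*Q') + s ≠ 0) :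
    u - nc * (u*Q) / ((Q + u*Q') + s)
      = u^3 * ((nc*(nc-2)*Q'^2 - nc*(nc-1)*Q*Q'') / ((s + ((nc-1)*Q - u*Q')) * ((Q + u*Q') + s))) := by
  rw [mul_div_assoc', eq_div_iff (mul_ne_zero hD hden), sub_mul, div_mul_eq_mul_div, mul_comm _ ((Q + u*Q') + s), mul_div_assoc, mul_div_cancel_left₀ _ hden]
  linear_combination (u) * hs2

/-- Local cubic convergence of Laguerre's method at a simple root: there is an analytic
branch `S` of the square root of the radicand near `ρ` with `S ρ = (n-1)p'(ρ)`, the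
resulting iteration function `L` is analytic near `ρ`, and `L z - ρ = O(|z - ρ|³)`. -/
theorem laguerre_cubic_convergence (p : Polynomial ℂ) (n : ℕ) (hn : 2 ≤ n)
    (hdeg : p.natDegree = n) (ρ : ℂ) (hroot : p.eval ρ = 0)
    (hsimple : p.derivative.eval ρ ≠ 0) :
    ∃ (S L : ℂ → ℂ) (δ C : ℝ), 0 < δ ∧ 0 < C ∧
      S ρ = ((n : ℂ) - 1) * p.derivative.eval ρ ∧
      (∀ z ∈ Metric.ball ρ δ,
        S z ^ 2 = ((n : ℂ) - 1) ^ 2 * (p.derivative.eval z) ^ 2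
          - (n : ℂ) * ((n : ℂ) - 1) * p.eval z * (p.derivative.derivative).eval z) ∧
      (∀ z ∈ Metric.ball ρ δ,
        L z = z - (n : ℂ) * p.eval z / (p.derivative.eval z + S z)) ∧
      AnalyticAt ℂ S ρ ∧ AnalyticAt ℂ L ρ ∧
      ∀ z ∈ Metric.ball ρ δ, ‖L z - ρ‖ ≤ C * ‖z - ρ‖ ^ 3 := by
  classical
  have hn0 : (n : ℂ) ≠ 0 := Nat.cast_ne_zero.mpr (by omega)
  have hn1 : (n : ℂ) - 1 ≠ 0 := sub_ne_zero.mpr (by exact_mod_cast (show n ≠ 1 by omega))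
  obtain ⟨q, hpq⟩ : ∃ q, p = (X - C ρ) * q :=
    ⟨p /ₘ (X - C ρ), (mul_divByMonic_eq_iff_isRoot.mpr hroot).symm⟩
  have ep : ∀ z : ℂ, p.eval z = (z - ρ) * q.eval z := by
    intro z; rw [hpq]; simp
  have hd1 : p.derivative = q + (X - C ρ) * q.derivative := by
    rw [hpq, derivative_mul]; simp
  have ep1 : ∀ z : ℂ, p.derivative.eval z = q.eval z + (z - ρ) * q.derivative.eval z := by
    intro z; rw [hd1]; simp
  have ep2 : ∀ z : ℂ, p.derivative.derivative.eval z
      = 2 * q.derivative.eval z + (z - ρ) * q.derivative.derivative.eval z := by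
    intro z
    rw [hd1, derivative_add, derivative_mul]
    simp
    ring
  have hqρ : q.eval ρ = p.derivative.eval ρ := by rw [ep1 ρ]; ring
  -- the radicand
  obtain ⟨R, hRdef⟩ : ∃ R : ℂ → ℂ, R = fun z => ((n:ℂ)-1)^2*(p.derivative.eval z)^2
      - (n:ℂ)*((n:ℂ)-1)*p.eval z*(p.derivative.derivative.eval z) := ⟨_, rfl⟩
  have hRρ : R ρ = ((n:ℂ)-1)^2 * (p.derivative.eval ρ)^2 := by simp [hRdef, hroot]
  have hRρ0 : R ρ ≠ 0 := by
    rw [hRρ]; exact mul_ne_zero (pow_ne_zero _ hn1) (pow_ne_zero _ hsimple)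
  have hRa : AnalyticAt ℂ R ρ := by
    rw [hRdef]
    exact ((analyticAt_const.mul ((p.derivative.differentiable.analyticAt ρ).pow 2)).sub
      (((analyticAt_const.mul (p.differentiable.analyticAt ρ))).mul
        (p.derivative.derivative.differentiable.analyticAt ρ)))
  -- the square-root branch
  obtain ⟨S, hSdef⟩ : ∃ S : ℂ → ℂ, S = fun z =>
      ((n:ℂ) - 1) * p.derivative.eval ρ * Complex.exp (Complex.log (R z / R ρ) / 2) := ⟨_, rfl⟩
  have hSρ : S ρ = ((n:ℂ) - 1) * p.derivative.eval ρ := by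
    simp [hSdef, div_self hRρ0]
  have hSsq : ∀ z, R z ≠ 0 → S z ^ 2 = R z := by
    intro z hz
    have h2 : Complex.exp (Complex.log (R z / R ρ) / 2) ^ 2 = R z / R ρ := by
      rw [sq, ← Complex.exp_add, add_halves, Complex.exp_log (div_ne_zero hz hRρ0)]
    calc S z ^ 2 = ((n:ℂ)-1)^2 * (p.derivative.eval ρ)^2
        * (Complex.exp (Complex.log (R z / R ρ) / 2) ^ 2) := by rw [hSdef]; ring
      _ = R ρ * (R z / R ρ) := by rw [h2, hRρ]
      _ = R z := by field_simp
  have hSa : AnalyticAt ℂ S ρ := by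
    rw [hSdef]
    apply analyticAt_const.mul
    have h1 : AnalyticAt ℂ (fun z => R z / R ρ) ρ := hRa.div analyticAt_const hRρ0
    have h2 : AnalyticAt ℂ (fun z => Complex.log (R z / R ρ)) ρ := by
      apply (analyticAt_clog ?_).comp h1
      rw [div_self hRρ0]
      exact Complex.one_mem_slitPlane
    exact analyticAt_cexp.comp (h2.div analyticAt_const (by norm_num))
  -- denominator, auxiliary functions
  obtain ⟨den, hdendef⟩ : ∃ den : ℂ → ℂ, den = fun z => p.derivative.eval z + S z := ⟨_, rfl⟩
  have hdenρ0 : den ρ ≠ 0 := by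
    have : den ρ = (n:ℂ) * p.derivative.eval ρ := by rw [hdendef]; dsimp only; rw [hSρ]; ring
    rw [this]; exact mul_ne_zero hn0 hsimple
  obtain ⟨DD, hDdef⟩ : ∃ DD : ℂ → ℂ, DD = fun z =>
      S z + (((n:ℂ)-1)*q.eval z - (z-ρ)*q.derivative.eval z) := ⟨_, rfl⟩
  have hDρ0 : DD ρ ≠ 0 := by
    have : DD ρ = 2*(((n:ℂ)-1)*p.derivative.eval ρ) := by
      rw [hDdef]; dsimp only; rw [hSρ, hqρ]; ring
    rw [this]; exact mul_ne_zero two_ne_zero (mul_ne_zero hn1 hsimple)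
  obtain ⟨G, hGdef⟩ : ∃ G : ℂ → ℂ, G = fun z =>
      ((n:ℂ)*((n:ℂ)-2)*(q.derivative.eval z)^2
        - (n:ℂ)*((n:ℂ)-1)*q.eval z*(q.derivative.derivative.eval z)) / (DD z * den z) := ⟨_, rfl⟩
  obtain ⟨L, hLdef⟩ : ∃ L : ℂ → ℂ, L = fun z => z - (n:ℂ) * p.eval z / den z := ⟨_, rfl⟩
  have hLa : AnalyticAt ℂ L ρ := by
    rw [hLdef]
    apply AnalyticAt.sub analyticAt_id
    apply (analyticAt_const.mul (p.differentiable.analyticAt ρ)).div ?_ hdenρ0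
    rw [hdendef]
    exact (p.derivative.differentiable.analyticAt ρ).add hSa
  -- the key local identity
  have key : ∀ z, R z ≠ 0 → DD z ≠ 0 → den z ≠ 0 → L z - ρ = (z-ρ)^3 * G z := by
    intro z hz hDz hdz
    have hs2 : S z ^ 2 = ((n:ℂ)-1)^2 * (q.eval z + (z-ρ)*q.derivative.eval z)^2
        - (n:ℂ)*((n:ℂ)-1)*((z-ρ)*q.eval z)
          *(2*q.derivative.eval z+(z-ρ)*q.derivative.derivative.eval z) := by
      rw [hSsq z hz, hRdef]; dsimp only; rw [ep z, ep1 z, ep2 z]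
    have hDz' : S z + (((n:ℂ)-1)*q.eval z - (z-ρ)*q.derivative.eval z) ≠ 0 := by
      rw [hDdef] at hDz; exact hDz
    have hdz' : (q.eval z + (z-ρ)*q.derivative.eval z) + S z ≠ 0 := by
      rw [hdendef] at hdz; dsimp only at hdz; rw [ep1 z] at hdz; exact hdz
    have main := laguerre_key ((n:ℂ)) (z-ρ) (q.eval z) (q.derivative.eval z)
      (q.derivative.derivative.eval z) (S z) hs2 hDz' hdz'
    calc L z - ρ = (z-ρ) - (n:ℂ) * ((z-ρ)*q.eval z)
        / ((q.eval z + (z-ρ)*q.derivative.eval z) + S z) := by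
          rw [hLdef]; dsimp only; rw [ep z, hdendef]; dsimp only; rw [ep1 z]; ring
      _ = (z-ρ)^3 * (((n:ℂ)*((n:ℂ)-2)*(q.derivative.eval z)^2
            - (n:ℂ)*((n:ℂ)-1)*q.eval z*(q.derivative.derivative.eval z))
          / ((S z + (((n:ℂ)-1)*q.eval z - (z-ρ)*q.derivative.eval z))
            * ((q.eval z + (z-ρ)*q.derivative.eval z) + S z))) := main
      _ = (z-ρ)^3 * G z := by
          rw [hGdef, hDdef, hdendef]; dsimp only; rw [ep1 z]
  -- continuity facts and choice of δ
  have hDc : ContinuousAt DD ρ := by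
    rw [hDdef]
    exact hSa.continuousAt.add (((continuous_const.mul q.differentiable.continuous).sub
      ((continuous_id.sub continuous_const).mul q.derivative.differentiable.continuous)).continuousAt)
  have hdenc : ContinuousAt den ρ := by
    rw [hdendef]
    exact (p.derivative.differentiable.continuous.continuousAt).add hSa.continuousAt
  have hGc : ContinuousAt G ρ := by
    rw [hGdef]
    apply ContinuousAt.div
    · exact ((continuous_const.mul (q.derivative.differentiable.continuous.pow 2)).sub
        ((continuous_const.mul q.differentiable.continuous).mul
          q.derivative.derivative.differentiable.continuous)).continuousAt
    · exact hDc.mul hdenc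
    · exact mul_ne_zero hDρ0 hdenρ0
  have h1 : ∀ᶠ z in nhds ρ, R z ≠ 0 := hRa.continuousAt.eventually_ne hRρ0
  have h2 : ∀ᶠ z in nhds ρ, DD z ≠ 0 := hDc.eventually_ne hDρ0
  have h3 : ∀ᶠ z in nhds ρ, den z ≠ 0 := hdenc.eventually_ne hdenρ0
  have h4 : ∀ᶠ z in nhds ρ, ‖G z‖ < ‖G ρ‖ + 1 :=
    hGc.norm (gt_mem_nhds (by linarith [norm_nonneg (G ρ)] : ‖G ρ‖ < ‖G ρ‖ + 1))
  obtain ⟨δ, hδpos, hδ⟩ := Metric.eventually_nhds_iff.mp ((h1.and (h2.and (h3.and h4))))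
  refine ⟨S, L, δ, ‖G ρ‖ + 1, hδpos, by positivity, hSρ, ?_, ?_, hSa, hLa, ?_⟩
  · intro z hz
    have := hSsq z (hδ (Metric.mem_ball.mp hz)).1
    rw [hRdef] at this
    exact this
  · intro z hz
    rw [hLdef, hdendef]
  · intro z hz
    obtain ⟨c1, c2, c3, c4⟩ := hδ (Metric.mem_ball.mp hz)
    rw [key z c1 c2 c3, norm_mul, norm_pow, mul_comm]
    exact mul_le_mul_of_nonneg_right (le_of_lt c4) (by positivity)
end

section
/- If ρ is a simple root of p and the starting point z satisfies |z − ρ| < d/(4(n−1)) where d is the minimal distance from ρ to the other roots, then the radicand of Laguerre's formula is nonzero: (n−1)²p'(z)² − n(n−1)p(z)p''(z) ≠ 0. -/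
open Finset

open Polynomial in
lemma derivative_prod_X_sub_C {ι : Type*} [DecidableEq ι] (s : Finset ι) (ρ : ι → ℂ) :
    derivative (∏ j ∈ s, (X - C (ρ j))) = ∑ i ∈ s, ∏ j ∈ s.erase i, (X - C (ρ j)) := by
  induction s using Finset.induction_on with
  | empty => simp
  | @insert a s ha ih =>
    rw [Finset.prod_insert ha, derivative_mul, derivative_X_sub_C, ih,
      Finset.sum_insert ha, Finset.erase_insert ha, Finset.mul_sum, one_mul]
    congr 1
    refine Finset.sum_congr rfl fun i hi => ?_
    rw [Finset.erase_insert_of_ne (fun h => ha (by rw [h]; exact hi)), Finset.prod_insert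
      (fun h => ha (Finset.mem_of_mem_erase h))]


lemma laguerre_aux_final (m d W : ℝ) (hm1 : 1 ≤ m) (hd : 0 < d) (hx : 4*m < W*d)
    (hF2 : 9*d^2*(m*W^2) ≤ 24*W*m*d + 16*m*(m+1) + 16*m^2) : False := by
  have hm0 : 0 < m := by linarith
  have haux1 : (0:ℝ) ≤ m * (m - 1) * (9 * m + 1) :=
    mul_nonneg (mul_nonneg hm0.le (by linarith)) (by linarith)
  have haux2 : (0:ℝ) < m * (W * d - 4 * m) * (72 * m - 24) :=
    mul_pos (mul_pos hm0 (by linarith)) (by linarith)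
  have haux3 : (0:ℝ) ≤ m * (W * d - 4 * m) ^ 2 := mul_nonneg hm0.le (sq_nonneg _)
  nlinarith [haux1, haux2, haux3]

lemma laguerre_aux_chain (m d W nA nB : ℝ) (hd : 0 < d) (hm1 : 1 ≤ m) (hW : 0 < W)
    (hA : nA ≤ m * (4/(3*d))) (hB : nB ≤ m * (4/(3*d))^2)
    (hAn : 0 ≤ nA) (hBn : 0 ≤ nB)
    (hle : m * W^2 ≤ 2*W*nA + (m+1)*nB + nA^2)
    (hx : 4*m < W*d) : False := by
  have hm0 : 0 < m := by linarith
  have hF : m * W ^ 2 ≤ 2 * W * (m * (4 / (3 * d))) + (m + 1) * (m * (4 / (3 * d)) ^ 2)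
      + (m * (4 / (3 * d))) ^ 2 := by
    have h1 : 2 * W * nA ≤ 2 * W * (m * (4 / (3 * d))) :=
      mul_le_mul_of_nonneg_left hA (by positivity)
    have h2 : (m + 1) * nB ≤ (m + 1) * (m * (4 / (3 * d)) ^ 2) :=
      mul_le_mul_of_nonneg_left hB (by linarith)
    have h3 : nA ^ 2 ≤ (m * (4 / (3 * d))) ^ 2 := pow_le_pow_left₀ hAn hA 2
    linarith
  have hF2 : 9 * d ^ 2 * (m * W ^ 2) ≤ 24 * W * m * d + 16 * m * (m + 1) + 16 * m ^ 2 := by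
    have h1 : 9 * d ^ 2 * (m * W ^ 2) ≤ 9 * d ^ 2 * (2 * W * (m * (4 / (3 * d)))
        + (m + 1) * (m * (4 / (3 * d)) ^ 2) + (m * (4 / (3 * d))) ^ 2) :=
      mul_le_mul_of_nonneg_left hF (by positivity)
    have h2 : 9 * d ^ 2 * (2 * W * (m * (4 / (3 * d)))
        + (m + 1) * (m * (4 / (3 * d)) ^ 2) + (m * (4 / (3 * d))) ^ 2)
        = 24 * W * m * d + 16 * m * (m + 1) + 16 * m ^ 2 := by
      field_simp
      ring
    linarith
  exact laguerre_aux_final m d W hm1 hd hx hF2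

set_option maxHeartbeats 1000000 in
/-- If `z` is within `d/(4(n-1))` of a simple root `ρ i₀` (where `d` is the minimal
distance from `ρ i₀` to the other roots), the Laguerre radicand is nonzero. -/
theorem laguerre_radicand_ne_zero_near_simple_root (n : ℕ) (hn : 2 ≤ n)
    (ρ : Fin n → ℂ) (i₀ : Fin n) (hsimple : ∀ j, j ≠ i₀ → ρ j ≠ ρ i₀)
    (p : ℂ → ℂ) (hp : ∀ z, p z = ∏ j, (z - ρ j))
    (d : ℝ) (hd : 0 < d) (hsep : ∀ j, j ≠ i₀ → d ≤ ‖ρ i₀ - ρ j‖)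
    (z : ℂ) (hz : z ≠ ρ i₀) (hclose : ‖z - ρ i₀‖ < d / (4 * ((n : ℝ) - 1))) :
    ((n : ℂ) - 1) ^ 2 * (deriv p z) ^ 2
      - (n : ℂ) * ((n : ℂ) - 1) * p z * deriv (deriv p) z ≠ 0 := by
  classical
  set m : ℝ := (n : ℝ) - 1 with hm
  have hm1 : (1 : ℝ) ≤ m := by
    have : (2 : ℝ) ≤ (n : ℝ) := by exact_mod_cast hn
    simp [hm]; linarith
  have hm0 : 0 < m := lt_of_lt_of_le one_pos hm1
  have hε : 0 < ‖z - ρ i₀‖ := by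
    rw [norm_pos_iff, sub_ne_zero]; exact hz
  have hεd : ‖z - ρ i₀‖ < d / 4 := by
    calc ‖z - ρ i₀‖ < d / (4 * m) := hclose
      _ ≤ d / 4 := by
          apply div_le_div_of_nonneg_left hd.le (by linarith)
          nlinarith
  have hfar : ∀ j, j ≠ i₀ → 3 * d / 4 ≤ ‖z - ρ j‖ := by
    intro j hj
    have h1 : d ≤ ‖ρ i₀ - ρ j‖ := hsep j hj
    have h2 : ‖ρ i₀ - ρ j‖ ≤ ‖ρ i₀ - z‖ + ‖z - ρ j‖ := by
      simpa [dist_eq_norm] using dist_triangle (ρ i₀) z (ρ j)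
    have h3 : ‖ρ i₀ - z‖ = ‖z - ρ i₀‖ := norm_sub_rev _ _
    linarith
  have hzj : ∀ j, z - ρ j ≠ 0 := by
    intro j
    by_cases hj : j = i₀
    · subst hj; rw [sub_ne_zero]; exact hz
    · have := hfar j hj
      intro h0
      rw [h0, norm_zero] at this
      linarith
  set a : Fin n → ℂ := fun j => (z - ρ j)⁻¹ with ha
  set S1 : ℂ := ∑ j, a j with hS1
  set S2 : ℂ := ∑ j, (a j) ^ 2 with hS2
  have hpz : p z ≠ 0 := by
    rw [hp]; exact Finset.prod_ne_zero_iff.mpr fun j _ => hzj j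
  have hprod_erase : ∀ i : Fin n, ∏ j ∈ univ.erase i, (z - ρ j) = p z * a i := by
    intro i
    have h1 := Finset.mul_prod_erase univ (fun j => z - ρ j) (Finset.mem_univ i)
    rw [hp, ← h1, ha]
    field_simp
    rw [eq_div_iff (hzj i)]
  open Polynomial in
  have key : deriv p z = p z * S1 ∧ deriv (deriv p) z = p z * (S1 ^ 2 - S2) := by
    set P : Polynomial ℂ := ∏ j, (X - C (ρ j)) with hPdef
    have hpe : p = fun w => P.eval w := funext fun w => by
      simp [hp, hPdef, eval_prod]
    have hd1P : derivative P = ∑ i, ∏ j ∈ univ.erase i, (X - C (ρ j)) :=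
      derivative_prod_X_sub_C _ _
    have hderiv_fun : deriv p = fun w => (derivative P).eval w := by
      funext w; rw [hpe, Polynomial.deriv]
    have heval1 : ∀ w : ℂ, (derivative P).eval w
        = ∑ i, ∏ j ∈ univ.erase i, (w - ρ j) := by
      intro w
      rw [hd1P, eval_finset_sum]
      exact Finset.sum_congr rfl fun i _ => by simp [eval_prod]
    constructor
    · rw [hderiv_fun]
      show Polynomial.eval z (derivative P) = p z * S1
      rw [heval1, Finset.mul_sum]
      exact Finset.sum_congr rfl fun i _ => hprod_erase i
    · rw [hderiv_fun, Polynomial.deriv, hd1P, map_sum, eval_finset_sum]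
      have hterm : ∀ i : Fin n,
          (derivative (∏ j ∈ univ.erase i, (X - C (ρ j)))).eval z
            = p z * (a i * (S1 - a i)) := by
        intro i
        rw [derivative_prod_X_sub_C, eval_finset_sum]
        have hinner : ∀ k ∈ univ.erase i,
            (∏ j ∈ (univ.erase i).erase k, (X - C (ρ j))).eval z
              = p z * a i * a k := by
          intro k hk
          have h1 := Finset.mul_prod_erase (univ.erase i) (fun j => z - ρ j) hk
          rw [hprod_erase i] at h1
          have h1' : (z - ρ k) * ∏ j ∈ (univ.erase i).erase k, (z - ρ j)
              = p z * a i := h1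
          have heq : (∏ j ∈ (univ.erase i).erase k, (X - C (ρ j))).eval z
              = ∏ j ∈ (univ.erase i).erase k, (z - ρ j) := by simp [eval_prod]
          rw [heq]
          calc ∏ j ∈ (univ.erase i).erase k, (z - ρ j)
              = (z - ρ k)⁻¹ * ((z - ρ k) * ∏ j ∈ (univ.erase i).erase k, (z - ρ j)) := by
                rw [← mul_assoc, inv_mul_cancel₀ (hzj k), one_mul]
            _ = (z - ρ k)⁻¹ * (p z * a i) := by rw [h1']
            _ = p z * a i * a k := by rw [ha]; ring
        rw [Finset.sum_congr rfl hinner, ← Finset.mul_sum,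
          Finset.sum_erase_eq_sub (Finset.mem_univ i), ← hS1]
        ring
      rw [Finset.sum_congr rfl (fun i _ => hterm i), ← Finset.mul_sum]
      congr 1
      rw [hS1, hS2]
      simp only [mul_sub, ← sq]
      rw [Finset.sum_sub_distrib, ← Finset.sum_mul, sq]
  obtain ⟨hD1, hD2⟩ := key
  rw [hD1, hD2]
  have hfactor : ((n : ℂ) - 1) ^ 2 * (p z * S1) ^ 2
      - (n : ℂ) * ((n : ℂ) - 1) * p z * (p z * (S1 ^ 2 - S2))
      = p z ^ 2 * (((n : ℂ) - 1) * ((n : ℂ) * S2 - S1 ^ 2)) := by ring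
  rw [hfactor]
  apply mul_ne_zero (pow_ne_zero _ hpz)
  have hncast : ((n : ℂ) - 1) = ((m : ℝ) : ℂ) := by rw [hm]; push_cast; ring
  apply mul_ne_zero
  · rw [hncast]
    exact_mod_cast ne_of_gt hm0
  intro hE0
  set w : ℂ := a i₀ with hw
  set A : ℂ := ∑ j ∈ univ.erase i₀, a j with hA
  set B : ℂ := ∑ j ∈ univ.erase i₀, (a j) ^ 2 with hB
  have hS1d : S1 = w + A := by
    rw [hS1, hA, Finset.sum_erase_eq_sub (Finset.mem_univ i₀), hw]; ring
  have hS2d : S2 = w ^ 2 + B := by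
    rw [hS2, hB, Finset.sum_erase_eq_sub (Finset.mem_univ i₀), hw]; ring
  have hEq : ((n : ℂ) - 1) * w ^ 2 = 2 * w * A - (n : ℂ) * B + A ^ 2 := by
    rw [hS1d, hS2d] at hE0
    linear_combination hE0
  -- norms
  have hWdef : ‖w‖ = ‖z - ρ i₀‖⁻¹ := by rw [hw, ha]; exact norm_inv _
  set W : ℝ := ‖w‖ with hWs
  have hWpos : 0 < W := by rw [hWdef]; positivity
  have hx : 4 * m < W * d := by
    have h4m : 0 < 4 * m := by linarith
    have h1 : (d / (4 * m))⁻¹ < ‖z - ρ i₀‖⁻¹ := inv_strictAnti₀ hε hclose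
    rw [inv_div] at h1
    rw [hWdef]
    calc 4 * m = (4 * m / d) * d := by field_simp
      _ < ‖z - ρ i₀‖⁻¹ * d := by
          apply mul_lt_mul_of_pos_right h1 hd
  have haj : ∀ j, j ≠ i₀ → ‖a j‖ ≤ 4 / (3 * d) := by
    intro j hj
    rw [ha]
    show ‖(z - ρ j)⁻¹‖ ≤ 4 / (3 * d)
    rw [norm_inv]
    have h1 := hfar j hj
    have h2 : (0:ℝ) < 3 * d / 4 := by linarith
    calc ‖z - ρ j‖⁻¹ ≤ (3 * d / 4)⁻¹ := inv_anti₀ h2 h1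
      _ = 4 / (3 * d) := by rw [inv_div]
  have hcard : (((univ : Finset (Fin n)).erase i₀).card : ℝ) = m := by
    rw [Finset.card_erase_of_mem (Finset.mem_univ i₀), Finset.card_univ,
      Fintype.card_fin, hm]
    have : 1 ≤ n := by omega
    push_cast [Nat.cast_sub this]
    ring
  have hAle : ‖A‖ ≤ m * (4 / (3 * d)) := by
    calc ‖A‖ ≤ ∑ j ∈ univ.erase i₀, ‖a j‖ := norm_sum_le _ _
      _ ≤ ∑ _j ∈ univ.erase i₀, 4 / (3 * d) :=
          Finset.sum_le_sum fun j hj => haj j (Finset.ne_of_mem_erase hj)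
      _ = m * (4 / (3 * d)) := by
          rw [Finset.sum_const, nsmul_eq_mul, hcard]
  have hBle : ‖B‖ ≤ m * (4 / (3 * d)) ^ 2 := by
    calc ‖B‖ ≤ ∑ j ∈ univ.erase i₀, ‖(a j) ^ 2‖ := norm_sum_le _ _
      _ ≤ ∑ _j ∈ univ.erase i₀, (4 / (3 * d)) ^ 2 := by
          refine Finset.sum_le_sum fun j hj => ?_
          rw [norm_pow]
          exact pow_le_pow_left₀ (norm_nonneg _) (haj j (Finset.ne_of_mem_erase hj)) 2
      _ = m * (4 / (3 * d)) ^ 2 := by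
          rw [Finset.sum_const, nsmul_eq_mul, hcard]
  have hnormLHS : ‖((n : ℂ) - 1) * w ^ 2‖ = m * W ^ 2 := by
    rw [norm_mul, norm_pow, hncast, Complex.norm_real, Real.norm_eq_abs,
      abs_of_pos hm0]
  have hnormRHS : ‖2 * w * A - (n : ℂ) * B + A ^ 2‖
      ≤ 2 * W * ‖A‖ + (n : ℝ) * ‖B‖ + ‖A‖ ^ 2 := by
    calc ‖2 * w * A - (n : ℂ) * B + A ^ 2‖
        ≤ ‖2 * w * A - (n : ℂ) * B‖ + ‖A ^ 2‖ := norm_add_le _ _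
      _ ≤ ‖2 * w * A‖ + ‖(n : ℂ) * B‖ + ‖A ^ 2‖ := by
          linarith [norm_sub_le (2 * w * A) ((n : ℂ) * B)]
      _ = 2 * W * ‖A‖ + (n : ℝ) * ‖B‖ + ‖A‖ ^ 2 := by
          have e1 : ‖2 * w * A‖ = 2 * W * ‖A‖ := by
            rw [norm_mul, norm_mul, ← hWs]; norm_num
          have e2 : ‖(n:ℂ) * B‖ = (n : ℝ) * ‖B‖ := by
            rw [norm_mul, Complex.norm_natCast]
          rw [e1, e2, norm_pow]
  have hnm : (n : ℝ) = m + 1 := by rw [hm]; ring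
  rw [hEq] at hnormLHS
  rw [hnm] at hnormRHS
  exact laguerre_aux_chain m d W ‖A‖ ‖B‖ hd hm1 hWpos hAle hBle
    (norm_nonneg _) (norm_nonneg _) (by linarith) hx
end

section
/- If z is within distance d/(2n) of a simple root ρ of p (d the minimal distance to other roots) and the branch of the square root in Laguerre's formula is chosen with S(z)/p(z) close to (n−1)/(z−ρ) (i.e., the dominant branch), then the next iterate z' = L(z) satisfies |z' − ρ| < |z − ρ|; i.e., Laguerre's method is strictly contracting toward ρ on this disk. -/
open Finset

set_option maxHeartbeats 1000000

/-- Strict contraction of Laguerre's method near a simple root: for a monic polynomial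
of degree `n ≥ 4` with simple root `ρ i₀` at distance ≥ `d` from the other roots, if
`0 < |z - ρ i₀| < d/(2n)` and the branch `T` of the square root of `(n-1)(nS₂ - S₁²)`
is chosen with `|S₁ + T|` maximal, then `|L z - ρ i₀| < |z - ρ i₀|`. -/
theorem laguerre_contracts_near_simple_root (n : ℕ) (hn : 4 ≤ n)
    (ρ : Fin n → ℂ) (i₀ : Fin n) (hsimple : ∀ j, j ≠ i₀ → ρ j ≠ ρ i₀)
    (p : ℂ → ℂ) (hp : ∀ z, p z = ∏ j, (z - ρ j))
    (d : ℝ) (hd : 0 < d) (hsep : ∀ j, j ≠ i₀ → d ≤ ‖ρ i₀ - ρ j‖)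
    (z : ℂ) (hz : z ≠ ρ i₀) (hclose : ‖z - ρ i₀‖ < d / (2 * n))
    (S₁ S₂ : ℂ) (hS₁ : S₁ = ∑ j, 1 / (z - ρ j)) (hS₂ : S₂ = ∑ j, 1 / (z - ρ j) ^ 2)
    (T : ℂ) (hT : T ^ 2 = ((n : ℂ) - 1) * ((n : ℂ) * S₂ - S₁ ^ 2))
    (hmax : ‖S₁ - T‖ ≤ ‖S₁ + T‖) :
    ‖(z - (n : ℂ) / (S₁ + T)) - ρ i₀‖ < ‖z - ρ i₀‖ := by
  have hN4 : (4:ℝ) ≤ (n:ℝ) := by exact_mod_cast hn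
  obtain ⟨w, hwdef⟩ : ∃ x : ℂ, x = z - ρ i₀ := ⟨_, rfl⟩
  have hw : w ≠ 0 := by rw [hwdef]; exact sub_ne_zero.mpr hz
  have hw0 : 0 < ‖w‖ := norm_pos_iff.mpr hw
  obtain ⟨K, hKdef⟩ : ∃ x : ℝ, x = (n:ℝ) - 1 := ⟨_, rfl⟩
  obtain ⟨M, hMdef⟩ : ∃ x : ℝ, x = 2*(n:ℝ) - 1 := ⟨_, rfl⟩
  have hK3 : (3:ℝ) ≤ K := by rw [hKdef]; linarith
  have hM7 : (7:ℝ) ≤ M := by rw [hMdef]; linarith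
  have hK0 : (0:ℝ) < K := by linarith
  have hM0 : (0:ℝ) < M := by linarith
  have hn0 : (0:ℝ) < (n:ℝ) := by linarith
  obtain ⟨m, hmdef⟩ : ∃ x : ℝ, x = d * M / (2*(n:ℝ)) := ⟨_, rfl⟩
  have hm0 : 0 < m := by
    rw [hmdef]; apply div_pos (mul_pos hd hM0); linarith
  have hwm : ‖w‖ < d / (2*(n:ℝ)) := by
    rw [hwdef]; convert hclose using 2
  have hzj : ∀ j, j ≠ i₀ → m ≤ ‖z - ρ j‖ := by
    intro j hj
    have h1 : d ≤ ‖ρ i₀ - ρ j‖ := hsep j hj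
    have h2 : ‖ρ i₀ - ρ j‖ ≤ ‖z - ρ j‖ + ‖w‖ := by
      have : ρ i₀ - ρ j = (z - ρ j) - w := by rw [hwdef]; ring
      rw [this]; exact norm_sub_le _ _
    have h3 : m = d - d / (2*(n:ℝ)) := by
      rw [hmdef, hMdef]; field_simp
    have h4 : ‖w‖ ≤ d / (2*(n:ℝ)) := le_of_lt hwm
    linarith
  have hne : ∀ j, j ≠ i₀ → z - ρ j ≠ 0 := by
    intro j hj
    have := hzj j hj
    intro h0
    rw [h0, norm_zero] at this
    linarith
  obtain ⟨A, hAdef⟩ : ∃ x : ℂ, x = ∑ j ∈ univ.erase i₀, 1/(z - ρ j) := ⟨_, rfl⟩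
  obtain ⟨B, hBdef⟩ : ∃ x : ℂ, x = ∑ j ∈ univ.erase i₀, 1/(z - ρ j)^2 := ⟨_, rfl⟩
  have hcard : (((univ : Finset (Fin n)).erase i₀).card : ℝ) = K := by
    rw [card_erase_of_mem (mem_univ _), card_univ, Fintype.card_fin, hKdef]
    have h1 : 1 ≤ n := by omega
    push_cast [Nat.cast_sub h1]
    ring
  have hAb : ‖A‖ ≤ K / m := by
    rw [hAdef]
    calc ‖∑ j ∈ univ.erase i₀, 1/(z - ρ j)‖ ≤ ∑ j ∈ univ.erase i₀, ‖1/(z - ρ j)‖ :=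
          norm_sum_le _ _
    _ ≤ ∑ _j ∈ univ.erase i₀, 1/m := by
        apply Finset.sum_le_sum
        intro j hj
        have hj' : j ≠ i₀ := (Finset.mem_erase.mp hj).1
        rw [norm_div, norm_one]
        exact div_le_div_of_nonneg_left zero_le_one hm0 (hzj j hj')
    _ = K / m := by
        rw [Finset.sum_const, nsmul_eq_mul, hcard]; ring
  have hBb : ‖B‖ ≤ K / m^2 := by
    rw [hBdef]
    calc ‖∑ j ∈ univ.erase i₀, 1/(z - ρ j)^2‖ ≤ ∑ j ∈ univ.erase i₀, ‖1/(z - ρ j)^2‖ :=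
          norm_sum_le _ _
    _ ≤ ∑ _j ∈ univ.erase i₀, 1/m^2 := by
        apply Finset.sum_le_sum
        intro j hj
        have hj' : j ≠ i₀ := (Finset.mem_erase.mp hj).1
        rw [norm_div, norm_one, norm_pow]
        apply div_le_div_of_nonneg_left zero_le_one (pow_pos hm0 2)
        exact pow_le_pow_left₀ (le_of_lt hm0) (hzj j hj') 2
    _ = K / m^2 := by
        rw [Finset.sum_const, nsmul_eq_mul, hcard]; ring
  obtain ⟨ε, hεdef⟩ : ∃ x : ℂ, x = w * A := ⟨_, rfl⟩
  obtain ⟨δ, hδdef⟩ : ∃ x : ℂ, x = w^2 * B := ⟨_, rfl⟩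
  have hεb : ‖ε‖ < K / M := by
    have h1 : ‖ε‖ ≤ ‖w‖ * (K/m) := by
      rw [hεdef, norm_mul]
      exact mul_le_mul_of_nonneg_left hAb (norm_nonneg w)
    have h2 : ‖w‖ * (K/m) < (d/(2*(n:ℝ))) * (K/m) := by
      apply mul_lt_mul_of_pos_right hwm (div_pos hK0 hm0)
    have h3 : (d/(2*(n:ℝ))) * (K/m) = K / M := by
      rw [hmdef]; field_simp
    linarith
  have hδb : ‖δ‖ ≤ K / M^2 := by
    have h1 : ‖δ‖ ≤ ‖w‖^2 * (K/m^2) := by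
      rw [hδdef, norm_mul, norm_pow]
      exact mul_le_mul_of_nonneg_left hBb (by positivity)
    have h2 : ‖w‖^2 ≤ (d/(2*(n:ℝ)))^2 :=
      pow_le_pow_left₀ (norm_nonneg w) (le_of_lt hwm) 2
    have h3 : (d/(2*(n:ℝ)))^2 * (K/m^2) = K / M^2 := by
      rw [hmdef]; field_simp
    calc ‖δ‖ ≤ ‖w‖^2 * (K/m^2) := h1
    _ ≤ (d/(2*(n:ℝ)))^2 * (K/m^2) := by
        apply mul_le_mul_of_nonneg_right h2 (by positivity)
    _ = K / M^2 := h3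
  have hu : w * S₁ = 1 + ε := by
    rw [hS₁, ← Finset.add_sum_erase _ _ (mem_univ i₀), ← hAdef, ← hwdef, hεdef,
      mul_add, mul_one_div, div_self hw]
  have hs2 : w^2 * S₂ = 1 + δ := by
    rw [hS₂, ← Finset.add_sum_erase _ _ (mem_univ i₀), ← hBdef, ← hwdef, hδdef,
      mul_add, mul_one_div, div_self (pow_ne_zero 2 hw)]
  have hv2 : (w*T)^2 = ((n:ℂ)-1)^2 + ((n:ℂ)-1) * ((n:ℂ)*δ - 2*ε - ε^2) := by
    have h1 : (w*T)^2 = ((n:ℂ)-1) * ((n:ℂ)*(w^2*S₂) - (w*S₁)^2) := by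
      rw [mul_pow, hT]; ring
    rw [h1, hs2, hu]; ring
  have hKc : ((n:ℂ)-1) = ((K:ℝ):ℂ) := by rw [hKdef]; push_cast; ring
  have hnormK : ‖((n:ℂ)-1)‖ = K := by
    rw [hKc, Complex.norm_real, Real.norm_eq_abs, abs_of_pos hK0]
  have hnormN : ‖(n:ℂ)‖ = (n:ℝ) := by
    rw [Complex.norm_natCast]
  have hdiff : ‖(w*T)^2 - ((n:ℂ)-1)^2‖ ≤ 3*K^2/M := by
    have h1 : (w*T)^2 - ((n:ℂ)-1)^2 = ((n:ℂ)-1)*((n:ℂ)*δ - 2*ε - ε^2) := by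
      rw [hv2]; ring
    rw [h1, norm_mul, hnormK]
    have h2 : ‖(n:ℂ)*δ - 2*ε - ε^2‖ ≤ (n:ℝ)*‖δ‖ + 2*‖ε‖ + ‖ε‖^2 := by
      calc ‖(n:ℂ)*δ - 2*ε - ε^2‖ ≤ ‖(n:ℂ)*δ - 2*ε‖ + ‖ε^2‖ := norm_sub_le _ _
      _ ≤ ‖(n:ℂ)*δ‖ + ‖2*ε‖ + ‖ε^2‖ := by linarith [norm_sub_le ((n:ℂ)*δ) (2*ε)]
      _ = (n:ℝ)*‖δ‖ + 2*‖ε‖ + ‖ε‖^2 := by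
          rw [norm_mul, norm_mul, norm_pow, hnormN]
          norm_num
    have h3 : (n:ℝ)*‖δ‖ + 2*‖ε‖ + ‖ε‖^2 ≤ (n:ℝ)*(K/M^2) + 2*(K/M) + (K/M)^2 := by
      have hε0 : 0 ≤ ‖ε‖ := norm_nonneg _
      have hεK : ‖ε‖ ≤ K/M := le_of_lt hεb
      have ha : ‖ε‖^2 ≤ (K/M)^2 := pow_le_pow_left₀ hε0 hεK 2
      have hb : (n:ℝ)*‖δ‖ ≤ (n:ℝ)*(K/M^2) := mul_le_mul_of_nonneg_left hδb (by positivity)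
      linarith only [ha, hb, hεK]
    have h4 : (n:ℝ)*(K/M^2) + 2*(K/M) + (K/M)^2 = 3*K/M := by
      have hnM : (n:ℝ) = M - K := by rw [hKdef, hMdef]; ring
      rw [hnM]
      field_simp
      ring
    calc K * ‖(n:ℂ)*δ - 2*ε - ε^2‖ ≤ K * (3*K/M) := by
          apply mul_le_mul_of_nonneg_left _ (le_of_lt hK0)
          rw [← h4]; linarith
    _ = 3*K^2/M := by ring
  have hdiff7 : ‖(w*T)^2 - ((n:ℂ)-1)^2‖ ≤ (3/7)*K^2 := by
    have : 3*K^2/M ≤ 3*K^2/7 := by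
      apply div_le_div_of_nonneg_left (by positivity) (by norm_num) hM7
    linarith
  have hvsq : (4/7)*K^2 ≤ ‖w*T‖^2 := by
    have h1 : ‖((n:ℂ)-1)^2‖ ≤ ‖(w*T)^2‖ + ‖(w*T)^2 - ((n:ℂ)-1)^2‖ := by
      have h := norm_add_le ((w*T)^2) (((n:ℂ)-1)^2 - (w*T)^2)
      have he : (w*T)^2 + (((n:ℂ)-1)^2 - (w*T)^2) = ((n:ℂ)-1)^2 := by ring
      rw [he, norm_sub_rev (((n:ℂ)-1)^2) ((w*T)^2)] at h
      exact h
    rw [norm_pow, norm_pow, hnormK] at h1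
    linarith only [h1, hdiff7]
  have hvlb : (3/4)*K ≤ ‖w*T‖ := by
    nlinarith only [norm_nonneg (w*T), hvsq, hK0]
  have hmax2 : ‖w*S₁ - w*T‖ ≤ ‖w*S₁ + w*T‖ := by
    rw [← mul_sub, ← mul_add, norm_mul, norm_mul]
    exact mul_le_mul_of_nonneg_left hmax (norm_nonneg w)
  have hre : 0 ≤ (w*S₁).re * (w*T).re + (w*S₁).im * (w*T).im := by
    have h : ‖w*S₁ - w*T‖^2 ≤ ‖w*S₁ + w*T‖^2 :=
      pow_le_pow_left₀ (norm_nonneg _) hmax2 2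
    rw [Complex.sq_norm, Complex.sq_norm,
      Complex.normSq_apply, Complex.normSq_apply] at h
    simp only [Complex.sub_re, Complex.sub_im, Complex.add_re, Complex.add_im] at h
    nlinarith only [h]
  have hεhalf : ‖ε‖ < 1/2 := by
    have : K/M < 1/2 := by
      rw [div_lt_iff₀ hM0, hKdef, hMdef]; linarith
    linarith
  have hε7 : ‖ε‖ < K/7 := by
    have : K/M ≤ K/7 := div_le_div_of_nonneg_left (le_of_lt hK0) (by norm_num) hM7
    linarith
  have hcs : |ε.re * (w*T).re + ε.im * (w*T).im| ≤ ‖ε‖ * ‖w*T‖ := by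
    have h1 := Complex.abs_re_le_norm (ε * (starRingEnd ℂ) (w*T))
    have h2 : (ε * (starRingEnd ℂ) (w*T)).re = ε.re * (w*T).re + ε.im * (w*T).im := by
      simp [Complex.mul_re, Complex.conj_re, Complex.conj_im]
      ring
    have h3 : ‖ε * (starRingEnd ℂ) (w*T)‖ = ‖ε‖ * ‖w*T‖ := by
      rw [norm_mul, Complex.norm_conj]
    rw [h2, h3] at h1
    exact h1
  have hrev : -(‖w*T‖/2) ≤ (w*T).re := by
    have h1 : (w*S₁).re = 1 + ε.re := by rw [hu]; simp
    have h2 : (w*S₁).im = ε.im := by rw [hu]; simp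
    rw [h1, h2] at hre
    have h3 : ε.re * (w*T).re + ε.im * (w*T).im ≤ ‖ε‖ * ‖w*T‖ :=
      (le_abs_self _).trans hcs
    have h4 : ‖ε‖ * ‖w*T‖ ≤ (1/2) * ‖w*T‖ := by
      apply mul_le_mul_of_nonneg_right (le_of_lt hεhalf) (norm_nonneg _)
    nlinarith only [hre, h3, h4]
  have hsqvK : ‖w*T + ((n:ℂ)-1)‖^2 = ((w*T).re + K)^2 + (w*T).im^2 := by
    rw [Complex.sq_norm, Complex.normSq_apply]
    simp only [Complex.add_re, Complex.add_im, Complex.sub_re, Complex.sub_im,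
      Complex.natCast_re, Complex.natCast_im, Complex.one_re, Complex.one_im, hKdef]
    ring
  have hsqv : ‖w*T‖^2 = (w*T).re^2 + (w*T).im^2 := by
    rw [Complex.sq_norm, Complex.normSq_apply]; ring
  have hvK : (4/5)*K ≤ ‖w*T + ((n:ℂ)-1)‖ := by
    have h75 : (16/25)*K^2 ≤ ‖w*T + ((n:ℂ)-1)‖^2 := by
      rw [hsqvK]
      nlinarith only [hrev, hvlb, hsqv, norm_nonneg (w*T), hK0,
        sq_nonneg (‖w*T‖ - K/2)]
    nlinarith only [norm_nonneg (w*T + ((n:ℂ)-1)), hK0, h75]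
  have hprod : ‖w*T - ((n:ℂ)-1)‖ * ‖w*T + ((n:ℂ)-1)‖ ≤ (3/7)*K^2 := by
    rw [← norm_mul]
    have h1 : (w*T - ((n:ℂ)-1)) * (w*T + ((n:ℂ)-1)) = (w*T)^2 - ((n:ℂ)-1)^2 := by
      ring
    rw [h1]
    exact hdiff7
  have hvmK : ‖w*T - ((n:ℂ)-1)‖ ≤ (15/28)*K := by
    nlinarith only [hprod, hvK, norm_nonneg (w*T - ((n:ℂ)-1)), hK0]
  have hsquv : ‖w*S₁ + w*T‖^2 = ((w*S₁).re + (w*T).re)^2 + ((w*S₁).im + (w*T).im)^2 := by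
    rw [Complex.sq_norm, Complex.normSq_apply]
    simp only [Complex.add_re, Complex.add_im]
    ring
  have huv : ‖w*T‖ ≤ ‖w*S₁ + w*T‖ := by
    have h1 : ‖w*T‖^2 ≤ ‖w*S₁ + w*T‖^2 := by
      rw [hsquv, hsqv]
      nlinarith only [hre, sq_nonneg (w*S₁).re, sq_nonneg (w*S₁).im]
    nlinarith only [norm_nonneg (w*T), norm_nonneg (w*S₁ + w*T), h1]
  have hkey : ‖w*S₁ + w*T - (n:ℂ)‖ < ‖w*S₁ + w*T‖ := by
    have hrw : w*S₁ + w*T - (n:ℂ) = (w*T - ((n:ℂ)-1)) + ε := by rw [hu]; ring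
    have h1 : ‖w*S₁ + w*T - (n:ℂ)‖ ≤ ‖w*T - ((n:ℂ)-1)‖ + ‖ε‖ := by
      rw [hrw]; exact norm_add_le _ _
    have h2 : (15/28)*K + K/7 < (3/4)*K := by linarith
    linarith
  have huvpos : 0 < ‖w*S₁ + w*T‖ := by
    have : (0:ℝ) < (3/4)*K := by linarith
    linarith [le_trans hvlb huv]
  have hne2 : S₁ + T ≠ 0 := by
    intro h0
    have : w*S₁ + w*T = 0 := by rw [← mul_add, h0, mul_zero]
    rw [this, norm_zero] at huvpos
    linarith
  have hST0 : 0 < ‖S₁ + T‖ := norm_pos_iff.mpr hne2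
  have hfin : (z - (n:ℂ)/(S₁+T)) - ρ i₀ = (w*S₁ + w*T - (n:ℂ))/(S₁+T) := by
    have h1 : (z - (n:ℂ)/(S₁+T)) - ρ i₀ = w - (n:ℂ)/(S₁+T) := by rw [hwdef]; ring
    rw [h1]
    field_simp
  have hgoal : ‖z - ρ i₀‖ = ‖w‖ := by rw [hwdef]
  rw [hfin, norm_div, hgoal]
  have hwnorm : ‖w*S₁ + w*T‖ / ‖S₁+T‖ = ‖w‖ := by
    rw [← mul_add, norm_mul, mul_div_assoc, div_self (ne_of_gt hST0), mul_one]
  calc ‖w*S₁ + w*T - (n:ℂ)‖ / ‖S₁+T‖ < ‖w*S₁ + w*T‖ / ‖S₁+T‖ := by gcongr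
  _ = ‖w‖ := hwnorm
end
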